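/- arXiv:1409.7051 — 3 statements merged into one kernel-verified Lean document; each statement's English description precedes it below -/
import Mathlib

section
/- For an abelian category C, a finitely presented functor F: C^op → Ab with presentation Hom(-,X) → Hom(-,Y) → F → 0 is effaceable (i.e. lies in eff C) if and only if F is annihilated by the left adjoint of the Yoneda embedding, i.e. the morphism X → Y is an epimorphism. -/
/-!
STATEMENT 0: For an abelian category `C`, the left adjoint of the Yoneda embedding
`C ⥤ mod C` (finitely presented additive functors `Cᵒᵖ ⥤ Ab`) exists, is exact,
and sends a functor `F` with presentation `Hom(-,X) → Hom(-,Y) → F → 0`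
to the cokernel of `X ⟶ Y`.
-/

open CategoryTheory CategoryTheory.Limits

universe v u

variable (C : Type u) [Category.{v} C] [Abelian C]

noncomputable instance preadditiveYonedaAdditive :
    (preadditiveYoneda (C := C)).Additive where
  map_add {X Y f g} := by
    ext U (x : Opposite.unop U ⟶ X)
    show x ≫ (f + g) = ((preadditiveYoneda.map f).app U) x + ((preadditiveYoneda.map g).app U) x
    rw [Preadditive.comp_add]; rfl

/-- A functor `F : Cᵒᵖ ⥤ Ab` is finitely presented (coherent) if it admits a presentation
`Hom(-,X) ⟶ Hom(-,Y) ⟶ F ⟶ 0`, i.e. it is isomorphic to the cokernel of a morphism of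
representable functors. -/
def IsFinitelyPresented (F : Cᵒᵖ ⥤ AddCommGrpCat.{v}) : Prop :=
  ∃ (X Y : C) (f : X ⟶ Y), Nonempty (F ≅ cokernel (preadditiveYoneda.map f))

/-- The category `mod C` of finitely presented functors. -/
abbrev ModC := ObjectProperty.FullSubcategory (IsFinitelyPresented C)

lemma isFinitelyPresented_yoneda (X : C) :
    IsFinitelyPresented C (preadditiveYoneda.obj X) :=
  ⟨X, X, 0,
    ⟨((cokernelIsoOfEq (by simp)).trans (cokernelZeroIsoTarget
        (X := preadditiveYoneda.obj X) (Y := preadditiveYoneda.obj X))).symm⟩⟩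

/-- The Yoneda embedding `C ⥤ mod C`. -/
noncomputable def yonedaMod : C ⥤ ModC C :=
  ObjectProperty.lift _ preadditiveYoneda (isFinitelyPresented_yoneda C)

/-- A finitely presented functor is effaceable if it admits a presentation
`Hom(-,X) ⟶ Hom(-,Y) ⟶ F ⟶ 0` with `X ⟶ Y` an epimorphism in `C`. -/
def IsEffaceable (F : Cᵒᵖ ⥤ AddCommGrpCat.{v}) : Prop :=
  ∃ (X Y : C) (f : X ⟶ Y), Epi f ∧ Nonempty (F ≅ cokernel (preadditiveYoneda.map f))

lemma aux_isZero_iff (L : ModC C ⥤ C) (adj : L ⊣ yonedaMod C) (F : ModC C)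
    {X Y : C} (f : X ⟶ Y) (e : F.obj ≅ cokernel (preadditiveYoneda.map f)) :
    IsZero (L.obj F) ↔ Epi f := by
  have key : ∀ (Z : C), Epi f → ∀ ψ : (F.obj ⟶ preadditiveYoneda.obj Z), ψ = 0 := by
    intro Z hf ψ
    set u : preadditiveYoneda.obj Y ⟶ preadditiveYoneda.obj Z :=
      cokernel.π (preadditiveYoneda.map f) ≫ e.inv ≫ ψ with hu
    have hfu : preadditiveYoneda.map f ≫ u = 0 := by
      rw [hu, ← Category.assoc, ← Category.assoc, cokernel.condition, zero_comp, zero_comp]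
    obtain ⟨g, hg⟩ := preadditiveYoneda.map_surjective u
    have hfg : f ≫ g = 0 := by
      apply preadditiveYoneda.map_injective
      rw [Functor.map_comp, hg, hfu, Functor.map_zero]
    have hg0 : g = 0 := by
      rw [Preadditive.epi_iff_cancel_zero] at hf
      exact hf Z g hfg
    have hu0 : u = 0 := by rw [← hg, hg0, Functor.map_zero]
    have : e.inv ≫ ψ = 0 := by
      rw [← cancel_epi (cokernel.π (preadditiveYoneda.map f)), comp_zero, ← hu]
      exact hu0
    rw [← Category.id_comp ψ, ← e.hom_inv_id, Category.assoc, this, comp_zero]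
  constructor
  · intro hz
    rw [Preadditive.epi_iff_cancel_zero]
    intro Z g hg
    let φ : F ⟶ (yonedaMod C).obj Z := ObjectProperty.homMk
      (e.hom ≫ cokernel.desc _ (preadditiveYoneda.map g)
        (by rw [← Functor.map_comp, hg, Functor.map_zero]) :
        F.obj ⟶ preadditiveYoneda.obj Z)
    let φ' : F ⟶ (yonedaMod C).obj Z := ObjectProperty.homMk
      (e.hom ≫ cokernel.desc _ (0 : preadditiveYoneda.obj Y ⟶ preadditiveYoneda.obj Z)
        comp_zero : F.obj ⟶ preadditiveYoneda.obj Z)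
    have h1 : (adj.homEquiv F Z).symm φ = (adj.homEquiv F Z).symm φ' := hz.eq_of_src _ _
    have h2 : φ = φ' := (adj.homEquiv F Z).symm.injective h1
    have h3 : cokernel.desc (preadditiveYoneda.map f) (preadditiveYoneda.map g)
          (by rw [← Functor.map_comp, hg, Functor.map_zero]) =
        cokernel.desc _ (0 : preadditiveYoneda.obj Y ⟶ preadditiveYoneda.obj Z) comp_zero := by
      have h2' : e.hom ≫ cokernel.desc _ (preadditiveYoneda.map g)
            (by rw [← Functor.map_comp, hg, Functor.map_zero]) =
          e.hom ≫ cokernel.desc _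
            (0 : preadditiveYoneda.obj Y ⟶ preadditiveYoneda.obj Z) comp_zero := congrArg (·.hom) h2
      exact (cancel_epi e.hom).mp h2'
    have h4 : preadditiveYoneda.map g = 0 := by
      have := cokernel.π_desc (preadditiveYoneda.map f) (preadditiveYoneda.map g)
        (by rw [← Functor.map_comp, hg, Functor.map_zero])
      rw [h3] at this
      simpa using this.symm
    apply preadditiveYoneda.map_injective
    rw [h4, Functor.map_zero]
  · intro hf
    rw [IsZero.iff_id_eq_zero]
    have hsub : ∀ ψ ψ' : (F ⟶ (yonedaMod C).obj (L.obj F)), ψ = ψ' := by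
      intro ψ ψ'
      have h1 : (ψ.hom : F.obj ⟶ preadditiveYoneda.obj (L.obj F)) = 0 := key _ hf ψ.hom
      have h2 : (ψ'.hom : F.obj ⟶ preadditiveYoneda.obj (L.obj F)) = 0 := key _ hf ψ'.hom
      exact ObjectProperty.hom_ext _ (h1.trans h2.symm)
    calc 𝟙 (L.obj F) = (adj.homEquiv F (L.obj F)).symm (adj.homEquiv F (L.obj F) (𝟙 _)) := by
          rw [Equiv.symm_apply_apply]
      _ = (adj.homEquiv F (L.obj F)).symm (adj.homEquiv F (L.obj F) 0) := by
          rw [hsub (adj.homEquiv F (L.obj F) (𝟙 _)) (adj.homEquiv F (L.obj F) 0)]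
      _ = 0 := by rw [Equiv.symm_apply_apply]

/-- A finitely presented functor `F` with presentation
`Hom(-,X) ⟶ Hom(-,Y) ⟶ F ⟶ 0` is effaceable if and only if `X ⟶ Y` is an
epimorphism, if and only if `F` is annihilated by the left adjoint `L` of the
Yoneda embedding. -/
theorem effaceable_iff (L : ModC C ⥤ C) (_ : L ⊣ yonedaMod C)
    (X Y : C) (f : X ⟶ Y) (F : ModC C)
    (_ : F.obj ≅ cokernel (preadditiveYoneda.map f)) :
    (IsEffaceable C F.obj ↔ Epi f) ∧ (IsZero (L.obj F) ↔ Epi f) := by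
  rename_i adj e
  have h2 : IsZero (L.obj F) ↔ Epi f := aux_isZero_iff C L adj F f e
  refine ⟨⟨?_, fun hf => ⟨X, Y, f, hf, ⟨e⟩⟩⟩, h2⟩
  rintro ⟨X', Y', g, hg, ⟨e'⟩⟩
  exact h2.mp ((aux_isZero_iff C L adj F g e').mpr hg)
end

section
/- Every finitely presented additive functor F: C^op → Ab on an abelian category C admits a projective resolution of length at most 2 by representable functors: 0 → Hom(-,X) → Hom(-,Y) → Hom(-,Z) → F → 0. -/
/-!
STATEMENT 0: For an abelian category `C`, the left adjoint of the Yoneda embedding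
`C ⥤ mod C` (finitely presented additive functors `Cᵒᵖ ⥤ Ab`) exists, is exact,
and sends a functor `F` with presentation `Hom(-,X) → Hom(-,Y) → F → 0`
to the cokernel of `X ⟶ Y`.
-/

open CategoryTheory CategoryTheory.Limits

universe v u

variable (C : Type u) [Category.{v} C] [Abelian C]

/-- Every finitely presented functor `F : Cᵒᵖ ⥤ Ab` on an abelian category admits a
projective resolution of length at most 2 by representable functors:
`0 ⟶ Hom(-,X) ⟶ Hom(-,Y) ⟶ Hom(-,Z) ⟶ F ⟶ 0`. -/
theorem fp_has_length_two_resolution (F : Cᵒᵖ ⥤ AddCommGrpCat.{v})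
    (hF : IsFinitelyPresented C F) :
    ∃ (X Y Z : C) (f : X ⟶ Y) (g : Y ⟶ Z) (p : preadditiveYoneda.obj Z ⟶ F)
      (w₁ : preadditiveYoneda.map f ≫ preadditiveYoneda.map g = 0)
      (w₂ : preadditiveYoneda.map g ≫ p = 0),
      Mono (preadditiveYoneda.map f) ∧ Epi p ∧
      (ShortComplex.mk _ _ w₁).Exact ∧ (ShortComplex.mk _ _ w₂).Exact := by
  obtain ⟨Y, Z, g, ⟨e⟩⟩ := hF
  -- `preadditiveYoneda` preserves limits
  have hpres : PreservesLimitsOfShape WalkingParallelPair (preadditiveYoneda (C := C)) :=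
    preservesLimitsOfShape_of_evaluation _ _ fun W =>
      have : PreservesLimitsOfSize.{0, 0} (preadditiveCoyoneda.obj W) :=
        preservesLimitsOfSize_shrink _
      preservesLimitsOfShape_of_natIso
        (F := preadditiveCoyoneda.obj W)
        (NatIso.ofComponents (fun X => Iso.refl _) (by intros; ext; rfl))
  refine ⟨kernel g, Y, Z, kernel.ι g, g, cokernel.π (preadditiveYoneda.map g) ≫ e.inv,
    ?_, ?_, ?_, ?_, ?_, ?_⟩
  · rw [← Functor.map_comp, kernel.condition, Functor.map_zero]
  · rw [← Category.assoc, cokernel.condition, zero_comp]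
  · -- Mono
    exact mono_of_isLimit_fork
      (KernelFork.mapIsLimit _ (kernelIsKernel g) preadditiveYoneda)
  · exact epi_comp _ _
  · -- exactness at Hom(-, Y)
    exact ShortComplex.exact_of_f_is_kernel _
      (KernelFork.mapIsLimit _ (kernelIsKernel g) preadditiveYoneda)
  · -- exactness at Hom(-, Z)
    refine ShortComplex.exact_of_g_is_cokernel _ ?_
    refine IsColimit.ofIsoColimit (cokernelIsCokernel (preadditiveYoneda.map g)) ?_
    exact Cofork.ext e.symm (by simp)
end

section
/- Let A be a Grothendieck abelian category, B ⊆ A a localising subcategory with inclusion right adjoint t: A → B. If I is a homotopically minimal complex of injective objects in A, then tI is a homotopically minimal complex of injective objects in B. -/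
/-!
STATEMENT 9: Let `A` be a Grothendieck abelian category and `B ⊆ A` a localising
subcategory with torsion functor `t : A ⥤ B` (right adjoint of the inclusion).
If `I` is a homotopically minimal complex of injectives in `A`, then `tI` is a
homotopically minimal complex of injectives in `B`.
-/

open CategoryTheory CategoryTheory.Limits

universe v u

/-- A morphism `f : X ⟶ I` is an injective envelope if it is an essential
monomorphism into an injective object. -/
def IsInjectiveEnvelope {A : Type*} [Category A] {X I : A} (f : X ⟶ I) : Prop :=
  Mono f ∧ Injective I ∧ ∀ ⦃Z : A⦄ (g : I ⟶ Z), Mono (f ≫ g) → Mono g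

/-- A complex of injectives is homotopically minimal if each inclusion
`Ker dⁿ ⟶ Iⁿ` is an injective envelope. -/
noncomputable def HomotopicallyMinimal {A : Type u} [Category.{v} A] [Abelian A]
    (I : CochainComplex A ℤ) : Prop :=
  ∀ n : ℤ, IsInjectiveEnvelope (kernel.ι (I.d n (n + 1)))

/-- The inclusion of a subcategory closed under subobjects preserves monomorphisms. -/
lemma incl_mono_aux {A : Type u} [Category.{v} A] [Abelian A] (P : A → Prop)
    (hsub : ∀ {X Y : A} (f : X ⟶ Y), Mono f → P Y → P X)
    {X Y : ObjectProperty.FullSubcategory P} (f : X ⟶ Y) [Mono f] :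
    Mono ((ObjectProperty.ι P).map f) := by
  apply CategoryTheory.Abelian.mono_of_kernel_ι_eq_zero
  set fA := (ObjectProperty.ι P).map f with hfA
  have hK : P (kernel fA) := hsub (kernel.ι fA) inferInstance X.property
  let κ' : (⟨kernel fA, hK⟩ : ObjectProperty.FullSubcategory P) ⟶ X := ObjectProperty.homMk (kernel.ι fA)
  let z : (⟨kernel fA, hK⟩ : ObjectProperty.FullSubcategory P) ⟶ X :=
    ObjectProperty.homMk (0 : kernel fA ⟶ X.obj)
  have h : κ' ≫ f = z ≫ f := by
    ext
    show kernel.ι fA ≫ fA = (0 : kernel fA ⟶ X.obj) ≫ fA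
    simp
  have := Mono.right_cancellation (f := f) κ' z h
  exact congrArg (fun φ => φ.hom) this

/-- The counit of the adjunction is a monomorphism. -/
lemma counit_mono_aux {A : Type u} [Category.{v} A] [Abelian A] (P : A → Prop)
    (hsub : ∀ {X Y : A} (f : X ⟶ Y), Mono f → P Y → P X)
    (t : A ⥤ ObjectProperty.FullSubcategory P)
    (adj : ObjectProperty.ι P ⊣ t) (X : A) :
    Mono (adj.counit.app X) := by
  apply CategoryTheory.Abelian.mono_of_kernel_ι_eq_zero
  set ε := adj.counit.app X with hε
  have hK : P (kernel ε) := hsub (kernel.ι ε) inferInstance (t.obj X).property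
  let κ' : (⟨kernel ε, hK⟩ : ObjectProperty.FullSubcategory P) ⟶ t.obj X := ObjectProperty.homMk (kernel.ι ε)
  let z : (⟨kernel ε, hK⟩ : ObjectProperty.FullSubcategory P) ⟶ t.obj X :=
    ObjectProperty.homMk (0 : kernel ε ⟶ (t.obj X).obj)
  have h : (adj.homEquiv _ X).symm κ' = (adj.homEquiv _ X).symm z := by
    rw [adj.homEquiv_counit, adj.homEquiv_counit]
    show kernel.ι ε ≫ ε = (0 : kernel ε ⟶ (t.obj X).obj) ≫ ε
    simp
  have : κ' = z := (adj.homEquiv _ X).symm.injective h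
  exact congrArg (fun φ => φ.hom) this

theorem torsion_functor_preserves_homotopically_minimal
    -- `A` is a Grothendieck abelian category:
    {A : Type u} [Category.{v} A] [Abelian A] [HasColimits A] [AB5 A]
    (G : A) (_ : IsSeparator G)
    -- `B` is a localising subcategory of `A`, given by a predicate `P` closed under
    -- subobjects, quotients, extensions and coproducts:
    (P : A → Prop)
    (hsub : ∀ {X Y : A} (f : X ⟶ Y), Mono f → P Y → P X)
    (hquot : ∀ {X Y : A} (f : X ⟶ Y), Epi f → P X → P Y)
    (hext : ∀ {X Y Z : A} (f : X ⟶ Y) (g : Y ⟶ Z) (w : f ≫ g = 0),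
      (CategoryTheory.ShortComplex.mk f g w).ShortExact → P X → P Z → P Y)
    (hcoprod : ∀ {ι : Type v} (f : ι → A), (∀ i, P (f i)) → P (∐ f))
    -- `t` is the right adjoint of the inclusion `B ⥤ A`:
    (t : A ⥤ ObjectProperty.FullSubcategory P) [t.Additive]
    (adj : ObjectProperty.ι P ⊣ t)
    -- `I` is a homotopically minimal complex of injectives in `A`:
    (I : CochainComplex A ℤ) (hinj : ∀ n : ℤ, Injective (I.X n))
    (hmin : HomotopicallyMinimal I) :
    -- then `tI` is a homotopically minimal complex of injectives in `B`.  We express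
    -- this via the complex `tI' = (t ⋙ inclusion).mapHomologicalComplex I` in `A`,
    -- whose terms and the kernels of whose differentials all lie in `B`:
    ∀ n : ℤ,
      letI tI' : CochainComplex A ℤ :=
        ((t ⋙ ObjectProperty.ι P).mapHomologicalComplex
          (ComplexShape.up ℤ)).obj I
      ∀ (hXn : P (tI'.X n)) (hker : P (kernel (tI'.d n (n + 1)))),
        Injective (⟨tI'.X n, hXn⟩ : ObjectProperty.FullSubcategory P) ∧
        IsInjectiveEnvelope
          (show (⟨kernel (tI'.d n (n + 1)), hker⟩ : ObjectProperty.FullSubcategory P) ⟶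
              ⟨tI'.X n, hXn⟩ from ObjectProperty.homMk (kernel.ι (tI'.d n (n + 1)))) := by
  intro n hXn hker
  haveI : (ObjectProperty.ι P).PreservesMonomorphisms :=
    ⟨fun f _ => incl_mono_aux P hsub f⟩
  have hIncInj : Injective (⟨_, hXn⟩ : ObjectProperty.FullSubcategory P) := by
    haveI := hinj n
    exact Injective.injective_of_adjoint adj (I.X n)
  refine ⟨hIncInj, ?_, hIncInj, ?_⟩
  · -- the kernel inclusion is a monomorphism in `B`
    apply (ObjectProperty.ι P).mono_of_mono_map
      (f := (show (⟨_, hker⟩ : ObjectProperty.FullSubcategory P) ⟶ ⟨_, hXn⟩ from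
        ObjectProperty.homMk (kernel.ι (((t ⋙ ObjectProperty.ι P).mapHomologicalComplex
          (ComplexShape.up ℤ)).obj I |>.d n (n + 1)))))
    show Mono (kernel.ι _)
    infer_instance
  · -- essentiality
    intro Z g hg
    -- notation
    set F := t ⋙ ObjectProperty.ι P with hF
    set d := I.d n (n + 1) with hd
    have hFd : (((F).mapHomologicalComplex (ComplexShape.up ℤ)).obj I).d n (n + 1)
        = F.map d := rfl
    set Fd := F.map d with hFdd
    -- the map `g` viewed in `A`
    let gA : F.obj (I.X n) ⟶ Z.obj := g.hom
    -- `Mono (kernel.ι Fd ≫ gA)` in `A`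
    have hgA : Mono (kernel.ι Fd ≫ gA) := by
      haveI : Mono ((show (⟨kernel Fd, hker⟩ : ObjectProperty.FullSubcategory P) ⟶ ⟨_, hXn⟩ from
          ObjectProperty.homMk (kernel.ι Fd)) ≫ g) := hg
      have := incl_mono_aux P hsub
        (X := (⟨kernel Fd, hker⟩ : ObjectProperty.FullSubcategory P)) (Y := Z)
        ((show (⟨kernel Fd, hker⟩ : ObjectProperty.FullSubcategory P) ⟶ ⟨_, hXn⟩ from
          ObjectProperty.homMk (kernel.ι Fd)) ≫ g)
      exact this
    -- counit maps, both mono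
    let ε : F.obj (I.X n) ⟶ I.X n := adj.counit.app (I.X n)
    let ε' : F.obj (I.X (n + 1)) ⟶ I.X (n + 1) := adj.counit.app (I.X (n + 1))
    haveI hε : Mono ε := counit_mono_aux P hsub t adj (I.X n)
    haveI hε' : Mono ε' := counit_mono_aux P hsub t adj (I.X (n + 1))
    have hnat : Fd ≫ ε' = ε ≫ d := by
      have := adj.counit.naturality d
      exact this
    -- the kernel of `gA` in `A`
    let N := kernel gA
    let ιN : N ⟶ F.obj (I.X n) := kernel.ι gA
    let m : N ⟶ I.X n := ιN ≫ ε
    haveI hm : Mono m := mono_comp _ _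
    let π : I.X n ⟶ cokernel m := cokernel.π m
    -- `kernel.ι d ≫ π` is mono
    haveI hκπ : Mono (kernel.ι d ≫ π) := by
      apply Preadditive.mono_of_cancel_zero
      intro W a ha
      have hv : (a ≫ kernel.ι d) ≫ cokernel.π m = 0 := by
        rw [Category.assoc]; exact ha
      let v : W ⟶ N := Abelian.monoLift m (a ≫ kernel.ι d) hv
      have hvm : v ≫ m = a ≫ kernel.ι d := Abelian.monoLift_comp m _ hv
      let u : W ⟶ F.obj (I.X n) := v ≫ ιN
      have hu : u ≫ Fd = 0 := by
        rw [← cancel_mono ε']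
        rw [Category.assoc, hnat, zero_comp]
        show u ≫ ε ≫ d = 0
        have huε : u ≫ ε = v ≫ m := Category.assoc v ιN ε
        rw [← Category.assoc]
        show (u ≫ ε) ≫ d = 0
        rw [huε, hvm, Category.assoc, kernel.condition, comp_zero]
      let ℓ : W ⟶ kernel Fd := kernel.lift Fd u hu
      have hℓ : ℓ ≫ kernel.ι Fd = u := kernel.lift_ι Fd u hu
      have hℓ0 : ℓ = 0 := by
        apply zero_of_comp_mono (kernel.ι Fd ≫ gA)
        rw [← Category.assoc, hℓ]
        show (v ≫ ιN) ≫ gA = 0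
        rw [Category.assoc, kernel.condition, comp_zero]
      have hu0 : u = 0 := by rw [← hℓ, hℓ0, zero_comp]
      have hv0 : v = 0 := zero_of_comp_mono ιN hu0
      have : a ≫ kernel.ι d = 0 := by rw [← hvm, hv0, zero_comp]
      exact zero_of_comp_mono (kernel.ι d) this
    -- minimality gives `Mono π`, hence `IsIso π`, hence `m = 0`
    haveI hπ : Mono π := (hmin n).2.2 π hκπ
    haveI : IsIso π := isIso_of_mono_of_epi π
    have hm0 : m = 0 := by
      rw [← cancel_mono π, zero_comp, cokernel.condition]
    have hιN0 : ιN = 0 := by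
      rw [← cancel_mono ε, zero_comp]; exact hm0
    have hgAmono : Mono gA := CategoryTheory.Abelian.mono_of_kernel_ι_eq_zero gA hιN0
    haveI : Mono ((ObjectProperty.ι P).map g) := hgAmono
    exact (ObjectProperty.ι P).mono_of_mono_map (f := g) this
end
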